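/- (Theorem 2.3, cross-multiplied form.) Let τ ∈ ℂ with 0 < Im τ, θ(z) := jacobiTheta₂(z + 1/2, τ), and L := ℤ + ℤτ. Fix positive integers n, a₁, …, a_m, b₁, …, b_l and linear forms f_i(x) = ∑_{r=1}^n c_{ir} x_r (1 ≤ i ≤ m), g_j(x) = ∑_{s=1}^n d_{js} x_s (1 ≤ j ≤ l) with integer coefficients, such that ∑_{i=1}^m a_i f_i(x)² = ∑_{j=1}^l b_j g_j(x)² for all x ∈ ℂⁿ. Then for every λ ∈ Lⁿ and every x ∈ ℂⁿ: ∏_{i=1}^m θ(f_i(x + λ))^{a_i} · ∏_{j=1}^l θ(g_j(x))^{b_j} = ∏_{i=1}^m θ(f_i(x))^{a_i} · ∏_{j=1}^l θ(g_j(x + λ))^{b_j}. (This expresses that the quotient ∏_i θ(f_i)^{a_i} / ∏_j θ(g_j)^{b_j} is invariant under translation by Lⁿ, i.e., descends to a rational function on Eⁿ ≅ (ℂ/L)ⁿ.) -/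

import Mathlib

open Complex Real

private lemma theta_shift_nat (τ : ℂ) (k : ℕ) : ∀ z : ℂ,
    jacobiTheta₂ (z + (k : ℂ) * τ) τ =
      cexp (-(π : ℂ) * I * ((k : ℂ) ^ 2 * τ + 2 * (k : ℂ) * z)) * jacobiTheta₂ z τ := by
  induction k with
  | zero => intro z; simp
  | succ k ih =>
    intro z
    have h1 : z + ((k : ℂ) + 1) * τ = (z + τ) + (k : ℂ) * τ := by ring
    push_cast
    rw [h1, ih (z + τ), jacobiTheta₂_add_left', ← mul_assoc, ← Complex.exp_add]
    congr 1
    ring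

private lemma theta_shift_int (τ : ℂ) (k : ℤ) (z : ℂ) :
    jacobiTheta₂ (z + (k : ℂ) * τ) τ =
      cexp (-(π : ℂ) * I * ((k : ℂ) ^ 2 * τ + 2 * (k : ℂ) * z)) * jacobiTheta₂ z τ := by
  rcases le_or_gt 0 k with hk | hk
  · obtain ⟨N, rfl⟩ := Int.eq_ofNat_of_zero_le hk
    push_cast
    exact theta_shift_nat τ N z
  · obtain ⟨N, rfl⟩ : ∃ N : ℕ, k = -(N : ℤ) := ⟨(-k).toNat, by omega⟩
    have h1 := theta_shift_nat τ N (z + ((-(N : ℤ) : ℤ) : ℂ) * τ)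
    have h2 : z + ((-(N : ℤ) : ℤ) : ℂ) * τ + (N : ℂ) * τ = z := by push_cast; ring
    rw [h2] at h1
    rw [h1, ← mul_assoc, ← Complex.exp_add]
    have h3 : -(π : ℂ) * I * (((-(N : ℤ) : ℤ) : ℂ) ^ 2 * τ +
        2 * ((-(N : ℤ) : ℤ) : ℂ) * z) +
        -(π : ℂ) * I * ((N : ℂ) ^ 2 * τ + 2 * (N : ℂ) *
          (z + ((-(N : ℤ) : ℤ) : ℂ) * τ)) = 0 := by push_cast; ring
    rw [h3, Complex.exp_zero, one_mul]

private lemma theta_shift_lattice (τ : ℂ) (p k : ℤ) (z : ℂ) :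
    jacobiTheta₂ (z + ((p : ℂ) + (k : ℂ) * τ)) τ =
      cexp (-(π : ℂ) * I * ((k : ℂ) ^ 2 * τ + 2 * (k : ℂ) * z)) * jacobiTheta₂ z τ := by
  have hper : Function.Periodic (jacobiTheta₂ · τ) 1 := fun w => jacobiTheta₂_add_left w τ
  have h1 : z + ((p : ℂ) + (k : ℂ) * τ) = (z + (k : ℂ) * τ) + (p : ℂ) * 1 := by ring
  have h2 : jacobiTheta₂ ((z + (k : ℂ) * τ) + (p : ℂ) * 1) τ =
      jacobiTheta₂ (z + (k : ℂ) * τ) τ := hper.int_mul p (z + (k : ℂ) * τ)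
  rw [h1, h2, theta_shift_int]

/-- Theorem 2.3, cross-multiplied form. Let `θ(z) := jacobiTheta₂ (z + 1/2) τ`
and `L = ℤ + ℤτ`. If `∑_i a_i f_i(x)² = ∑_j b_j g_j(x)²` as quadratic forms on `ℂⁿ`, where
`f_i, g_j` are linear forms with integer coefficients and `a_i, b_j` positive integers, then for
every `λ ∈ Lⁿ` and `x ∈ ℂⁿ`:
`∏_i θ(f_i(x+λ))^(a_i) · ∏_j θ(g_j(x))^(b_j) = ∏_i θ(f_i(x))^(a_i) · ∏_j θ(g_j(x+λ))^(b_j)`. -/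
theorem theta_quotient_lattice_invariant_cross (τ : ℂ) (hτ : 0 < τ.im)
    (n m l : ℕ) (hn : 0 < n) (hm : 0 < m) (hl : 0 < l)
    (a : Fin m → ℕ) (b : Fin l → ℕ) (ha : ∀ i, 0 < a i) (hb : ∀ j, 0 < b j)
    (c : Fin m → Fin n → ℤ) (d : Fin l → Fin n → ℤ)
    (h : ∀ x : Fin n → ℂ,
      ∑ i, (a i : ℂ) * (∑ r, (c i r : ℂ) * x r) ^ 2 =
        ∑ j, (b j : ℂ) * (∑ s, (d j s : ℂ) * x s) ^ 2)
    (lam : Fin n → ℂ) (hlam : ∀ r, ∃ p q : ℤ, lam r = (p : ℂ) + (q : ℂ) * τ)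
    (x : Fin n → ℂ) :
    (∏ i, (jacobiTheta₂ ((∑ r, (c i r : ℂ) * (x r + lam r)) + 1 / 2) τ) ^ (a i)) *
      (∏ j, (jacobiTheta₂ ((∑ s, (d j s : ℂ) * x s) + 1 / 2) τ) ^ (b j)) =
    (∏ i, (jacobiTheta₂ ((∑ r, (c i r : ℂ) * x r) + 1 / 2) τ) ^ (a i)) *
      (∏ j, (jacobiTheta₂ ((∑ s, (d j s : ℂ) * (x s + lam s)) + 1 / 2) τ) ^ (b j)) := by
  choose p q hpq using hlam
  -- integer lattice coordinates of f_i(λ) and g_j(λ)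
  set Pa : Fin m → ℤ := fun i => ∑ r, c i r * p r with hPa
  set Qa : Fin m → ℤ := fun i => ∑ r, c i r * q r with hQa
  set Pb : Fin l → ℤ := fun j => ∑ s, d j s * p s with hPb
  set Qb : Fin l → ℤ := fun j => ∑ s, d j s * q s with hQb
  set F : Fin m → ℂ := fun i => ∑ r, (c i r : ℂ) * x r with hF
  set G : Fin l → ℂ := fun j => ∑ s, (d j s : ℂ) * x s with hG
  have hQaC : ∀ i, ((Qa i : ℤ) : ℂ) = ∑ r, (c i r : ℂ) * (q r : ℂ) := by
    intro i; rw [hQa]; push_cast; rfl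
  have hQbC : ∀ j, ((Qb j : ℤ) : ℂ) = ∑ s, (d j s : ℂ) * (q s : ℂ) := by
    intro j; rw [hQb]; push_cast; rfl
  -- f_i(x+λ) = f_i(x) + (Pa i + Qa i τ)
  have hshiftF : ∀ i, (∑ r, (c i r : ℂ) * (x r + lam r)) + 1 / 2 =
      (F i + 1 / 2) + (((Pa i : ℤ) : ℂ) + ((Qa i : ℤ) : ℂ) * τ) := by
    intro i
    have : ∀ r, (c i r : ℂ) * (x r + lam r) =
        (c i r : ℂ) * x r + ((c i r : ℂ) * (p r : ℂ) + ((c i r : ℂ) * (q r : ℂ)) * τ) := by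
      intro r; rw [hpq r]; ring
    rw [Finset.sum_congr rfl (fun r _ => this r), Finset.sum_add_distrib,
      Finset.sum_add_distrib, ← Finset.sum_mul, hF, hPa, hQa]
    push_cast
    ring
  have hshiftG : ∀ j, (∑ s, (d j s : ℂ) * (x s + lam s)) + 1 / 2 =
      (G j + 1 / 2) + (((Pb j : ℤ) : ℂ) + ((Qb j : ℤ) : ℂ) * τ) := by
    intro j
    have : ∀ s, (d j s : ℂ) * (x s + lam s) =
        (d j s : ℂ) * x s + ((d j s : ℂ) * (p s : ℂ) + ((d j s : ℂ) * (q s : ℂ)) * τ) := by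
      intro s; rw [hpq s]; ring
    rw [Finset.sum_congr rfl (fun s _ => this s), Finset.sum_add_distrib,
      Finset.sum_add_distrib, ← Finset.sum_mul, hG, hPb, hQb]
    push_cast
    ring
  have keyF : ∀ i, jacobiTheta₂ ((∑ r, (c i r : ℂ) * (x r + lam r)) + 1 / 2) τ =
      cexp (-(π : ℂ) * I * (((Qa i : ℤ) : ℂ) ^ 2 * τ + 2 * ((Qa i : ℤ) : ℂ) * (F i + 1 / 2))) *
        jacobiTheta₂ (F i + 1 / 2) τ := by
    intro i; rw [hshiftF i, theta_shift_lattice]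
  have keyG : ∀ j, jacobiTheta₂ ((∑ s, (d j s : ℂ) * (x s + lam s)) + 1 / 2) τ =
      cexp (-(π : ℂ) * I * (((Qb j : ℤ) : ℂ) ^ 2 * τ + 2 * ((Qb j : ℤ) : ℂ) * (G j + 1 / 2))) *
        jacobiTheta₂ (G j + 1 / 2) τ := by
    intro j; rw [hshiftG j, theta_shift_lattice]
  -- scalar identities
  have hz2C : (∑ i, (a i : ℂ) * ((Qa i : ℤ) : ℂ) ^ 2) =
      ∑ j, (b j : ℂ) * ((Qb j : ℤ) : ℂ) ^ 2 := by
    have := h (fun r => (q r : ℂ))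
    simpa only [hQaC, hQbC] using this
  have hz2 : (∑ i, (a i : ℤ) * Qa i ^ 2) = ∑ j, (b j : ℤ) * Qb j ^ 2 := by
    exact_mod_cast hz2C
  -- polarization: bilinear identity
  have hbil : (∑ i, (a i : ℂ) * (((Qa i : ℤ) : ℂ) * F i)) =
      ∑ j, (b j : ℂ) * (((Qb j : ℤ) : ℂ) * G j) := by
    have hx := h x
    have hxq := h (fun r => x r + (q r : ℂ))
    have hc : ∀ i, (∑ r, (c i r : ℂ) * (x r + (q r : ℂ))) = F i + ((Qa i : ℤ) : ℂ) := by
      intro i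
      simp only [mul_add, Finset.sum_add_distrib, hQaC, hF]
    have hd : ∀ j, (∑ s, (d j s : ℂ) * (x s + (q s : ℂ))) = G j + ((Qb j : ℤ) : ℂ) := by
      intro j
      simp only [mul_add, Finset.sum_add_distrib, hQbC, hG]
    simp only [hc, hd] at hxq
    have e1 : (∑ i, (a i : ℂ) * (F i + ((Qa i : ℤ) : ℂ)) ^ 2) =
        (∑ i, (a i : ℂ) * F i ^ 2) + (2 * ∑ i, (a i : ℂ) * (((Qa i : ℤ) : ℂ) * F i)) +
          ∑ i, (a i : ℂ) * ((Qa i : ℤ) : ℂ) ^ 2 := by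
      rw [Finset.mul_sum, ← Finset.sum_add_distrib, ← Finset.sum_add_distrib]
      exact Finset.sum_congr rfl fun i _ => by ring
    have e2 : (∑ j, (b j : ℂ) * (G j + ((Qb j : ℤ) : ℂ)) ^ 2) =
        (∑ j, (b j : ℂ) * G j ^ 2) + (2 * ∑ j, (b j : ℂ) * (((Qb j : ℤ) : ℂ) * G j)) +
          ∑ j, (b j : ℂ) * ((Qb j : ℤ) : ℂ) ^ 2 := by
      rw [Finset.mul_sum, ← Finset.sum_add_distrib, ← Finset.sum_add_distrib]
      exact Finset.sum_congr rfl fun j _ => by ring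
    rw [e1, e2, hx, hz2C] at hxq
    have h2 : (2 : ℂ) * ∑ i, (a i : ℂ) * (((Qa i : ℤ) : ℂ) * F i) =
        2 * ∑ j, (b j : ℂ) * (((Qb j : ℤ) : ℂ) * G j) := by
      have := hxq
      linear_combination this
    exact mul_left_cancel₀ (two_ne_zero) h2
  -- parity
  have hpar : (2 : ℤ) ∣ ((∑ i, (a i : ℤ) * Qa i) - ∑ j, (b j : ℤ) * Qb j) := by
    have h2 := congrArg (fun t : ℤ => (t : ZMod 2)) hz2
    push_cast at h2
    simp only [ZMod.pow_card] at h2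
    have hcast : (((∑ i, (a i : ℤ) * Qa i) - ∑ j, (b j : ℤ) * Qb j : ℤ) : ZMod 2) = 0 := by
      push_cast
      rw [sub_eq_zero]
      exact h2
    exact_mod_cast (ZMod.intCast_zmod_eq_zero_iff_dvd _ 2).mp hcast
  obtain ⟨k, hk⟩ := hpar
  have hkC : (∑ i, (a i : ℂ) * ((Qa i : ℤ) : ℂ)) - (∑ j, (b j : ℂ) * ((Qb j : ℤ) : ℂ)) =
      2 * (k : ℂ) := by exact_mod_cast congrArg (fun t : ℤ => (t : ℂ)) hk
  -- rewrite products
  simp only [keyF, keyG, mul_pow, Finset.prod_mul_distrib, ← Complex.exp_nat_mul,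
    ← Complex.exp_sum]
  have hexp : cexp (∑ i, (a i : ℕ) *
        (-(π : ℂ) * I * (((Qa i : ℤ) : ℂ) ^ 2 * τ + 2 * ((Qa i : ℤ) : ℂ) * (F i + 1 / 2)))) =
      cexp (∑ j, (b j : ℕ) *
        (-(π : ℂ) * I * (((Qb j : ℤ) : ℂ) ^ 2 * τ + 2 * ((Qb j : ℤ) : ℂ) * (G j + 1 / 2)))) := by
    have eA : (∑ i, (a i : ℕ) *
        (-(π : ℂ) * I * (((Qa i : ℤ) : ℂ) ^ 2 * τ + 2 * ((Qa i : ℤ) : ℂ) * (F i + 1 / 2)))) =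
        (-(π : ℂ) * I * τ) * (∑ i, (a i : ℂ) * ((Qa i : ℤ) : ℂ) ^ 2) +
          (-2 * (π : ℂ) * I) * (∑ i, (a i : ℂ) * (((Qa i : ℤ) : ℂ) * F i)) +
          (-(π : ℂ) * I) * (∑ i, (a i : ℂ) * ((Qa i : ℤ) : ℂ)) := by
      rw [Finset.mul_sum, Finset.mul_sum, Finset.mul_sum, ← Finset.sum_add_distrib,
        ← Finset.sum_add_distrib]
      exact Finset.sum_congr rfl fun i _ => by push_cast; ring
    have eB : (∑ j, (b j : ℕ) *
        (-(π : ℂ) * I * (((Qb j : ℤ) : ℂ) ^ 2 * τ + 2 * ((Qb j : ℤ) : ℂ) * (G j + 1 / 2)))) =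
        (-(π : ℂ) * I * τ) * (∑ j, (b j : ℂ) * ((Qb j : ℤ) : ℂ) ^ 2) +
          (-2 * (π : ℂ) * I) * (∑ j, (b j : ℂ) * (((Qb j : ℤ) : ℂ) * G j)) +
          (-(π : ℂ) * I) * (∑ j, (b j : ℂ) * ((Qb j : ℤ) : ℂ)) := by
      rw [Finset.mul_sum, Finset.mul_sum, Finset.mul_sum, ← Finset.sum_add_distrib,
        ← Finset.sum_add_distrib]
      exact Finset.sum_congr rfl fun j _ => by push_cast; ring
    rw [eA, eB, hz2C, hbil]
    have : (-(π : ℂ) * I) * (∑ i, (a i : ℂ) * ((Qa i : ℤ) : ℂ)) =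
        (-(π : ℂ) * I) * (∑ j, (b j : ℂ) * ((Qb j : ℤ) : ℂ)) + (-k : ℤ) * (2 * π * I) := by
      rw [Int.cast_neg]
      linear_combination (-(π : ℂ) * I) * hkC
    rw [this, ← add_assoc, Complex.exp_add, Complex.exp_int_mul_two_pi_mul_I, mul_one]
  rw [hexp]
  ring
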